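/- Let p = [b_1^{a_1} ⋯ b_r^{a_r}] (b_1 ≥ ⋯ ≥ b_r) be an orthogonal partition of 2n+1, and set P := [p_1 p_1 (2n*)] where 2n* = (Σ_{i : b_i odd} a_i) − 1. Then in the dominance order on partitions of 2n one has P^{Sp_{2n}} ≤ ((p^-)_{Sp_{2n}})^t, i.e. the Sp_{2n}-expansion of P is dominated by the Barbasch–Vogan dual of p. -/

import Mathlib

namespace JiangWF

/-- `sCount p i` : the number of parts of `p` that are `≥ i`. -/
def sCount (p : Multiset ℕ) (i : ℕ) : ℕ := (p.filter (fun a => i ≤ a)).card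

/-- `rCount p i` : the number of parts of `p` equal to `i`. -/
def rCount (p : Multiset ℕ) (i : ℕ) : ℕ := p.count i

/-- The largest part of `p` (`0` for the empty partition). -/
def maxPart (p : Multiset ℕ) : ℕ := p.sup

/-- The smallest part of `p` (`0` for the empty partition). -/
noncomputable def minPart (p : Multiset ℕ) : ℕ := sInf {a : ℕ | a ∈ p}

/-- The transpose partition: its `i`-th part is `sCount p i`, for `1 ≤ i ≤ maxPart p`. -/
def transpose (p : Multiset ℕ) : Multiset ℕ :=
  (Multiset.range (maxPart p)).map fun i => sCount p (i + 1)

/-- The sum of the `m` largest parts of `p`. -/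
def topSum (p : Multiset ℕ) (m : ℕ) : ℕ :=
  ∑ i ∈ Finset.Icc 1 p.sum, min m (sCount p i)

/-- Dominance order: `domLE p q` means `p ≤ q`. -/
def domLE (p q : Multiset ℕ) : Prop := ∀ m, topSum p m ≤ topSum q m

/-- `p` is a partition of `N`: all parts positive, summing to `N`. -/
def IsPartitionOf (p : Multiset ℕ) (N : ℕ) : Prop := (∀ a ∈ p, 0 < a) ∧ p.sum = N

/-- Symplectic partition: every odd part occurs with even multiplicity. -/
def IsSymplectic (p : Multiset ℕ) : Prop := ∀ a, a % 2 = 1 → Even (p.count a)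

/-- Orthogonal partition: every even part occurs with even multiplicity. -/
def IsOrthogonal (p : Multiset ℕ) : Prop := ∀ a, a % 2 = 0 → Even (p.count a)

/-- `p^-`: decrease the smallest part by one (deleting it if it becomes `0`). -/
noncomputable def pMinus (p : Multiset ℕ) : Multiset ℕ :=
  if minPart p ≤ 1 then p.erase (minPart p)
  else (minPart p - 1) ::ₘ p.erase (minPart p)

/-- `p^+`: increase the largest part by one. -/
def pPlus (p : Multiset ℕ) : Multiset ℕ := (maxPart p + 1) ::ₘ p.erase (maxPart p)

/-- `p^{+-}`: increase the largest part by one and decrease the smallest by one. -/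
noncomputable def pPM (p : Multiset ℕ) : Multiset ℕ := pMinus (pPlus p)

/-- `p₁ = [⌊b_1/2⌋^{a_1} ⋯ ⌊b_r/2⌋^{a_r}]^t` (discarding zero entries before transposing). -/
def pOne (p : Multiset ℕ) : Multiset ℕ :=
  transpose ((p.map fun b => b / 2).filter fun x => 0 < x)

/-- `Σ_{i : b_i odd} a_i`: the number of odd parts of `p`. -/
def oddMult (p : Multiset ℕ) : ℕ := (p.filter fun a => a % 2 = 1).card

/-- `n* = ⌊(Σ_{i : b_i odd} a_i)/2⌋`. -/
def nStar (p : Multiset ℕ) : ℕ := oddMult p / 2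

/-- Append an extra part `m` to `q`, omitted if `m = 0`. -/
def addPart (m : ℕ) (q : Multiset ℕ) : Multiset ℕ := if m = 0 then q else m ::ₘ q

/-- `c` is the `Sp`-collapse of `p`: the maximal symplectic partition `≤ p` in dominance. -/
def IsSpCollapse (p c : Multiset ℕ) : Prop :=
  IsPartitionOf c p.sum ∧ IsSymplectic c ∧ domLE c p ∧
    ∀ c', IsPartitionOf c' p.sum → IsSymplectic c' → domLE c' p → domLE c' c

/-- `c` is the `SO`-collapse of `p`: the maximal orthogonal partition `≤ p` in dominance. -/
def IsSOCollapse (p c : Multiset ℕ) : Prop :=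
  IsPartitionOf c p.sum ∧ IsOrthogonal c ∧ domLE c p ∧
    ∀ c', IsPartitionOf c' p.sum → IsOrthogonal c' → domLE c' p → domLE c' c

/-- `e` is the `Sp`-expansion of `p`: the minimal special symplectic partition `≥ p`. -/
def IsSpExpansion (p e : Multiset ℕ) : Prop :=
  IsPartitionOf e p.sum ∧ IsSymplectic e ∧ IsSymplectic (transpose e) ∧ domLE p e ∧
    ∀ e', IsPartitionOf e' p.sum → IsSymplectic e' → IsSymplectic (transpose e') →
      domLE p e' → domLE e e'

/-- `e` is the `SO_{2n+1}`-expansion of `p`: the minimal special orthogonal partition `≥ p`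
(odd case: special means the transpose is orthogonal). -/
def IsSOOddExpansion (p e : Multiset ℕ) : Prop :=
  IsPartitionOf e p.sum ∧ IsOrthogonal e ∧ IsOrthogonal (transpose e) ∧ domLE p e ∧
    ∀ e', IsPartitionOf e' p.sum → IsOrthogonal e' → IsOrthogonal (transpose e') →
      domLE p e' → domLE e e'

/-- `e` is the `SO_{2n}`-expansion of `p`: the minimal special orthogonal partition `≥ p`
(even case: special means the transpose is symplectic). -/
def IsSOEvenExpansion (p e : Multiset ℕ) : Prop :=
  IsPartitionOf e p.sum ∧ IsOrthogonal e ∧ IsSymplectic (transpose e) ∧ domLE p e ∧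
    ∀ e', IsPartitionOf e' p.sum → IsOrthogonal e' → IsSymplectic (transpose e') →
      domLE p e' → domLE e e'

/-- `dim_C(q)` for a symplectic partition `q` of `2k`:
`2k² + k − (1/2)Σ s_i(q)² − (1/2)Σ_{i odd} r_i(q)` (note `2k² + k = (|q|² + |q|)/2`). -/
def dimC (p : Multiset ℕ) : ℚ :=
  ((p.sum : ℚ) ^ 2 + (p.sum : ℚ)) / 2
    - (∑ i ∈ Finset.Icc 1 p.sum, (sCount p i : ℚ) ^ 2) / 2
    - (∑ i ∈ Finset.Icc 1 p.sum, if i % 2 = 1 then (rCount p i : ℚ) else 0) / 2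

/-- `dim_B(q)` for an orthogonal partition `q` of `2k+1`:
`2k² + k − (1/2)Σ s_i(q)² + (1/2)Σ_{i odd} r_i(q)` (note `2k² + k = (|q|² − |q|)/2`). -/
def dimB (p : Multiset ℕ) : ℚ :=
  ((p.sum : ℚ) ^ 2 - (p.sum : ℚ)) / 2
    - (∑ i ∈ Finset.Icc 1 p.sum, (sCount p i : ℚ) ^ 2) / 2
    + (∑ i ∈ Finset.Icc 1 p.sum, if i % 2 = 1 then (rCount p i : ℚ) else 0) / 2

/-- `dim_D(q)` for an orthogonal partition `q` of `2k`:
`2k² − k − (1/2)Σ s_i(q)² + (1/2)Σ_{i odd} r_i(q)` (note `2k² − k = (|q|² − |q|)/2`). -/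
def dimD (p : Multiset ℕ) : ℚ :=
  ((p.sum : ℚ) ^ 2 - (p.sum : ℚ)) / 2
    - (∑ i ∈ Finset.Icc 1 p.sum, (sCount p i : ℚ) ^ 2) / 2
    + (∑ i ∈ Finset.Icc 1 p.sum, if i % 2 = 1 then (rCount p i : ℚ) else 0) / 2



section lemmas
open Multiset Finset

lemma sCount_zero (i : ℕ) : sCount 0 i = 0 := rfl

lemma sCount_cons (a : ℕ) (p : Multiset ℕ) (i : ℕ) :
    sCount (a ::ₘ p) i = (if i ≤ a then 1 else 0) + sCount p i := by
  simp only [sCount, Multiset.filter_cons]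
  split <;> simp [Nat.add_comm]

lemma sCount_anti (p : Multiset ℕ) {i j : ℕ} (h : i ≤ j) : sCount p j ≤ sCount p i := by
  induction p using Multiset.induction_on with
  | empty => simp [sCount_zero]
  | cons a s ih =>
    rw [sCount_cons, sCount_cons]
    have h2 : (if j ≤ a then 1 else 0) ≤ (if i ≤ a then 1 else 0) := by split <;> split <;> omega
    exact Nat.add_le_add h2 ih

lemma one_le_sCount_iff (p : Multiset ℕ) (i : ℕ) : 1 ≤ sCount p i ↔ ∃ a ∈ p, i ≤ a := by
  constructor
  · intro h
    have : (p.filter (fun a => i ≤ a)) ≠ 0 := by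
      intro h0; rw [sCount, h0] at h; simp at h
    obtain ⟨a, ha⟩ := Multiset.exists_mem_of_ne_zero this
    exact ⟨a, (Multiset.mem_filter.mp ha).1, (Multiset.mem_filter.mp ha).2⟩
  · rintro ⟨a, ha, hia⟩
    have : a ∈ p.filter (fun a => i ≤ a) := Multiset.mem_filter.mpr ⟨ha, hia⟩
    exact Multiset.card_pos_iff_exists_mem.mpr ⟨a, this⟩

lemma mem_le_sum {p : Multiset ℕ} {a : ℕ} (h : a ∈ p) : a ≤ p.sum := by
  induction p using Multiset.induction_on with
  | empty => simp at h
  | cons b s ih =>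
    rw [Multiset.mem_cons] at h
    rw [Multiset.sum_cons]
    rcases h with h | h
    · omega
    · have := ih h; omega

lemma sCount_le_sum (p : Multiset ℕ) {i : ℕ} (hi : 1 ≤ i) : sCount p i ≤ p.sum := by
  induction p using Multiset.induction_on with
  | empty => simp [sCount_zero]
  | cons a s ih => rw [sCount_cons, Multiset.sum_cons]; split <;> omega

lemma sCount_eq_zero (p : Multiset ℕ) {i : ℕ} (h : p.sum < i) : sCount p i = 0 := by
  by_contra hne
  have h1 : 1 ≤ sCount p i := Nat.one_le_iff_ne_zero.mpr hne
  obtain ⟨a, ha, hia⟩ := (one_le_sCount_iff p i).mp h1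
  have := mem_le_sum ha; omega

lemma count_add_sCount (p : Multiset ℕ) (a : ℕ) :
    p.count a + sCount p (a + 1) = sCount p a := by
  induction p using Multiset.induction_on with
  | empty => simp [sCount_zero]
  | cons b s ih =>
    rw [sCount_cons, sCount_cons, Multiset.count_cons]
    split_ifs <;> omega


section helpers
variable (p : Multiset ℕ)

lemma card_filter_Icc_le (m x : ℕ) : ((Finset.Icc 1 m).filter (fun i => i ≤ x)).card = min x m := by
  have h : (Finset.Icc 1 m).filter (fun i => i ≤ x) = Finset.Icc 1 (min x m) := by
    ext y; simp only [Finset.mem_filter, Finset.mem_Icc]; omega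
  rw [h, Nat.card_Icc]; omega

lemma sum_sCount (F : Finset ℕ) :
    ∑ i ∈ F, sCount p i = (p.map (fun a => (F.filter (fun i => i ≤ a)).card)).sum := by
  induction p using Multiset.induction_on with
  | empty => simp [sCount]
  | cons b s ih =>
    have h : ∀ i ∈ F, sCount (b ::ₘ s) i = (if i ≤ b then 1 else 0) + sCount s i :=
      fun i _ => sCount_cons b s i
    rw [Finset.sum_congr rfl h, Finset.sum_add_distrib, ih, Multiset.map_cons,
      Multiset.sum_cons, Finset.card_filter]

lemma colSum_eq (m : ℕ) :
    ∑ i ∈ Finset.Icc 1 m, sCount p i = (p.map (fun a => min a m)).sum := by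
  rw [sum_sCount]
  congr 1
  exact Multiset.map_congr rfl fun a _ => card_filter_Icc_le m a

lemma sum_sCount_self : ∑ i ∈ Finset.Icc 1 p.sum, sCount p i = p.sum := by
  rw [colSum_eq]
  have h : p.map (fun a => min a p.sum) = p.map id := by
    refine Multiset.map_congr rfl fun a ha => ?_
    have := mem_le_sum ha
    simp only [id]; omega
  rw [h, Multiset.map_id]

lemma sum_Icc_split (f : ℕ → ℕ) {b c : ℕ} (h1 : 1 ≤ b) (h2 : b ≤ c) :
    ∑ i ∈ Finset.Icc 1 c, f i = ∑ i ∈ Finset.Icc 1 b, f i + ∑ i ∈ Finset.Ioc b c, f i := by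
  have hu : Finset.Icc 1 c = Finset.Icc 1 b ∪ Finset.Ioc b c := by
    ext y; simp only [Finset.mem_union, Finset.mem_Icc, Finset.mem_Ioc]; omega
  rw [hu, Finset.sum_union (by
    simp only [Finset.disjoint_left, Finset.mem_Icc, Finset.mem_Ioc]
    intro a ha hb; omega)]

lemma card_filter_Ioc_le (v S x : ℕ) (hx : x ≤ S) :
    ((Finset.Ioc v S).filter (fun i => i ≤ x)).card = x - v := by
  have h : (Finset.Ioc v S).filter (fun i => i ≤ x) = Finset.Ioc v (min x S) := by
    ext y; simp only [Finset.mem_filter, Finset.mem_Ioc]; omega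
  rw [h, Nat.card_Ioc]; omega

lemma sum_Ioc_sCount (v S : ℕ) (hS : ∀ a ∈ p, a ≤ S) :
    ∑ i ∈ Finset.Ioc v S, sCount p i = (p.map (fun a => a - v)).sum := by
  rw [sum_sCount]
  congr 1
  exact Multiset.map_congr rfl fun a ha => card_filter_Ioc_le v S a (hS a ha)

lemma topSum_le_sum (m : ℕ) : topSum p m ≤ p.sum := by
  calc topSum p m ≤ ∑ i ∈ Finset.Icc 1 p.sum, sCount p i :=
        Finset.sum_le_sum fun i _ => min_le_right _ _
    _ = p.sum := sum_sCount_self p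

lemma topSum_mono {m m' : ℕ} (h : m ≤ m') : topSum p m ≤ topSum p m' :=
  Finset.sum_le_sum fun i _ => by omega

lemma topSum_zero : topSum p 0 = 0 := by simp [topSum]

lemma topSum_le_mul (m k : ℕ) (h : p.sum ≤ k) : topSum p m ≤ k * m := by
  calc topSum p m ≤ ∑ _i ∈ Finset.Icc 1 p.sum, m :=
        Finset.sum_le_sum fun i _ => min_le_left _ _
    _ = p.sum * m := by
        rw [Finset.sum_const, Nat.card_Icc, smul_eq_mul]
        congr 1
    _ ≤ k * m := Nat.mul_le_mul_right m h
end helpers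

lemma topSum_window (p : Multiset ℕ) {v m : ℕ} (hv1 : 1 ≤ v)
    (h1 : sCount p (v + 1) ≤ m) (h2 : m ≤ sCount p v) (hvS : v ≤ p.sum) :
    topSum p m = m * v + (p.map (fun a => a - v)).sum := by
  have e1 : ∀ i ∈ Finset.Icc 1 v, min m (sCount p i) = m := by
    intro i hi
    have hi2 := (Finset.mem_Icc.mp hi).2
    have := sCount_anti p hi2
    omega
  have e2 : ∀ i ∈ Finset.Ioc v p.sum, min m (sCount p i) = sCount p i := by
    intro i hi
    have hi1 := (Finset.mem_Ioc.mp hi).1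
    have h3 : sCount p i ≤ sCount p (v + 1) := sCount_anti p (show v + 1 ≤ i by omega)
    omega
  rw [topSum, sum_Icc_split _ hv1 hvS, Finset.sum_congr rfl e1, Finset.sum_congr rfl e2,
    Finset.sum_const, Nat.card_Icc, smul_eq_mul,
    sum_Ioc_sCount p v p.sum fun a ha => mem_le_sum ha]
  have h4 : v + 1 - 1 = v := rfl
  rw [h4, Nat.mul_comm]

lemma filter_sum_eq (p : Multiset ℕ) (m : ℕ) :
    (p.filter (fun a => m < a)).sum = m * sCount p (m + 1) + (p.map (fun a => a - m)).sum := by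
  induction p using Multiset.induction_on with
  | empty => simp [sCount]
  | cons b s ih =>
    by_cases h : m < b
    · rw [Multiset.filter_cons, if_pos h, sCount_cons, if_pos (show m + 1 ≤ b by omega),
        Multiset.map_cons, Multiset.sum_cons, Multiset.sum_add, Multiset.sum_singleton,
        Nat.mul_add, Nat.mul_one]
      omega
    · rw [Multiset.filter_cons, if_neg h, sCount_cons, if_neg (show ¬ (m + 1 ≤ b) by omega),
        Multiset.map_cons, Multiset.sum_cons, zero_add, Nat.zero_add]
      have hb : b - m = 0 := by omega
      rw [hb]
      omega

lemma topSum_corner (p : Multiset ℕ) {m : ℕ} (hm1 : 1 ≤ m) (hmS : m ≤ p.sum) :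
    topSum p (sCount p (m + 1)) = (p.filter (fun a => m < a)).sum := by
  have e1 : ∀ i ∈ Finset.Icc 1 m, min (sCount p (m + 1)) (sCount p i) = sCount p (m + 1) := by
    intro i hi
    have hi2 := (Finset.mem_Icc.mp hi).2
    have := sCount_anti p (show i ≤ m + 1 by omega)
    omega
  have e2 : ∀ i ∈ Finset.Ioc m p.sum, min (sCount p (m + 1)) (sCount p i) = sCount p i := by
    intro i hi
    have hi1 := (Finset.mem_Ioc.mp hi).1
    have := sCount_anti p (show m + 1 ≤ i by omega)
    omega
  rw [topSum, sum_Icc_split _ hm1 hmS, Finset.sum_congr rfl e1, Finset.sum_congr rfl e2,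
    Finset.sum_const, Nat.card_Icc, smul_eq_mul,
    sum_Ioc_sCount p m p.sum fun a ha => mem_le_sum ha, filter_sum_eq]
  have h4 : m + 1 - 1 = m := rfl
  rw [h4, Nat.mul_comm]

lemma sum_mod_two (p : Multiset ℕ) :
    p.sum % 2 = (p.filter (fun a => a % 2 = 1)).card % 2 := by
  induction p using Multiset.induction_on with
  | empty => simp
  | cons b s ih =>
    rw [Multiset.sum_cons, Multiset.filter_cons]
    by_cases h : b % 2 = 1
    · rw [if_pos h, Multiset.card_add, Multiset.card_singleton]
      omega
    · rw [if_neg h, zero_add]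
      omega

lemma even_card_multiset (X : Multiset ℕ) (h : ∀ v ∈ X.toFinset, Even (X.count v)) :
    Even X.card := by
  have h2 : 2 ∣ ∑ v ∈ X.toFinset, X.count v :=
    Finset.dvd_sum fun v hv => even_iff_two_dvd.mp (h v hv)
  rw [Multiset.toFinset_sum_count_eq] at h2
  exact even_iff_two_dvd.mpr h2

lemma symplectic_filter (c : Multiset ℕ) (hc : IsSymplectic c) (w : ℕ) :
    IsSymplectic (c.filter (fun a => w ≤ a)) := by
  intro a ha
  rw [Multiset.count_filter]
  split
  · exact hc a ha
  · exact Even.zero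

lemma even_sum_symplectic (c : Multiset ℕ) (hc : IsSymplectic c) : Even c.sum := by
  have h1 := sum_mod_two c
  have h2 : Even (c.filter (fun a => a % 2 = 1)).card := by
    apply even_card_multiset
    intro v hv
    have hvmem := Multiset.mem_toFinset.mp hv
    have hvodd : v % 2 = 1 := (Multiset.mem_filter.mp hvmem).2
    rw [Multiset.count_filter, if_pos hvodd]
    exact hc v hvodd
  rw [Nat.even_iff] at h2 ⊢
  omega

lemma even_filter_sum (c : Multiset ℕ) (hc : IsSymplectic c) (w : ℕ) :
    Even ((c.filter (fun a => w ≤ a)).sum) :=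
  even_sum_symplectic _ (symplectic_filter c hc w)

lemma even_card_filter_even (p : Multiset ℕ) (h : IsOrthogonal p) (v : ℕ) :
    Even ((p.filter (fun a => v < a ∧ a % 2 = 0)).card) := by
  apply even_card_multiset
  intro x hx
  have hxm := Multiset.mem_toFinset.mp hx
  obtain ⟨hxp, hxc⟩ := Multiset.mem_filter.mp hxm
  rw [Multiset.count_filter, if_pos hxc]
  exact h x hxc.2

lemma map_sub_parity_odd (p : Multiset ℕ) {v : ℕ} (hv : v % 2 = 1) :
    (p.map (fun a => a - v)).sum % 2
      = ((p.filter (fun a => v < a)).sum + (p.filter (fun a => v < a)).card) % 2 := by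
  induction p using Multiset.induction_on with
  | empty => simp
  | cons b s ih =>
    rw [Multiset.map_cons, Multiset.sum_cons, Multiset.filter_cons]
    by_cases h : v < b
    · rw [if_pos h, Multiset.sum_add, Multiset.card_add, Multiset.sum_singleton,
        Multiset.card_singleton]
      omega
    · rw [if_neg h, zero_add]
      have hb : b - v = 0 := by omega
      rw [hb]
      omega

lemma map_sub_parity_even (p : Multiset ℕ) {v : ℕ} (hv : v % 2 = 0) :
    (p.map (fun a => a - v)).sum % 2 = (p.filter (fun a => v < a)).sum % 2 := by
  induction p using Multiset.induction_on with
  | empty => simp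
  | cons b s ih =>
    rw [Multiset.map_cons, Multiset.sum_cons, Multiset.filter_cons]
    by_cases h : v < b
    · rw [if_pos h, Multiset.sum_add, Multiset.sum_singleton]
      omega
    · rw [if_neg h, zero_add]
      have hb : b - v = 0 := by omega
      rw [hb]
      omega

lemma card_filter_split (p : Multiset ℕ) (v : ℕ) :
    (p.filter (fun a => v < a)).card
      = (p.filter (fun a => v < a ∧ a % 2 = 1)).card
        + (p.filter (fun a => v < a ∧ a % 2 = 0)).card := by
  induction p using Multiset.induction_on with
  | empty => simp
  | cons b s ih =>
    rw [Multiset.filter_cons, Multiset.filter_cons, Multiset.filter_cons]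
    by_cases h : v < b
    · by_cases h2 : b % 2 = 1
      · rw [if_pos h, if_pos ⟨h, h2⟩, if_neg (by omega : ¬ (v < b ∧ b % 2 = 0))]
        simp only [Multiset.card_add, Multiset.card_singleton, zero_add]
        omega
      · rw [if_pos h, if_neg (by omega : ¬ (v < b ∧ b % 2 = 1)), if_pos ⟨h, by omega⟩]
        simp only [Multiset.card_add, Multiset.card_singleton, zero_add]
        omega
    · rw [if_neg h, if_neg (by omega : ¬ (v < b ∧ b % 2 = 1)),
        if_neg (by omega : ¬ (v < b ∧ b % 2 = 0))]
      simp only [zero_add]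
      exact ih

lemma filter_sum_parity (p : Multiset ℕ) (v : ℕ) :
    (p.filter (fun a => v < a)).sum % 2
      = (p.filter (fun a => v < a ∧ a % 2 = 1)).card % 2 := by
  rw [sum_mod_two, Multiset.filter_filter]
  have h : Multiset.filter (fun a => a % 2 = 1 ∧ v < a) p
      = Multiset.filter (fun a => v < a ∧ a % 2 = 1) p :=
    Multiset.filter_congr (fun a _ => by tauto)
  rw [h]

lemma topSum_parity_oddrun (p : Multiset ℕ) (horth : IsOrthogonal p) {v m : ℕ}
    (hv : v % 2 = 1) (h1 : sCount p (v + 1) ≤ m) (h2 : m ≤ sCount p v) (hvS : v ≤ p.sum) :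
    topSum p m % 2 = m % 2 := by
  rw [topSum_window p (by omega) h1 h2 hvS]
  have hmap := map_sub_parity_odd p hv
  have hcs := card_filter_split p v
  have hfs := filter_sum_parity p v
  have heven := even_card_filter_even p horth v
  have hmul : m * v % 2 = m % 2 := by
    rw [Nat.mul_mod, hv, Nat.mul_one]
    omega
  rw [Nat.even_iff] at heven
  omega

lemma min_succ (m x : ℕ) : min m (x + 1) = min m x + (if x + 1 ≤ m then 1 else 0) := by
  split <;> omega

lemma sup_mem_of_ne_zero {p : Multiset ℕ} (h : p ≠ 0) : p.sup ∈ p := by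
  induction p using Multiset.induction_on with
  | empty => exact absurd rfl h
  | cons b s ih =>
    by_cases hs : s = 0
    · subst hs; simp
    · rw [Multiset.sup_cons]
      rcases le_total b s.sup with hbs | hbs
      · rw [sup_eq_right.mpr hbs]
        exact Multiset.mem_cons_of_mem (ih hs)
      · rw [sup_eq_left.mpr hbs]
        exact Multiset.mem_cons_self _ _

lemma le_maxPart_of_mem {p : Multiset ℕ} {a : ℕ} (h : a ∈ p) : a ≤ maxPart p :=
  Multiset.le_sup h

lemma maxPart_le_sum (p : Multiset ℕ) : maxPart p ≤ p.sum :=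
  Multiset.sup_le.mpr fun _ ha => mem_le_sum ha

lemma sCount_eq_zero_of_gt_max {p : Multiset ℕ} {i : ℕ} (h : maxPart p < i) :
    sCount p i = 0 := by
  by_contra hne
  obtain ⟨a, ha, hia⟩ := (one_le_sCount_iff p i).mp (by omega)
  have := le_maxPart_of_mem ha
  omega

lemma one_le_sCount_of_le_max {p : Multiset ℕ} {i : ℕ} (hi : 1 ≤ i) (h : i ≤ maxPart p) :
    1 ≤ sCount p i := by
  have hne : p ≠ 0 := by
    intro h0
    rw [h0] at h
    have hz : maxPart (0 : Multiset ℕ) = 0 := rfl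
    omega
  exact (one_le_sCount_iff p i).mpr ⟨p.sup, sup_mem_of_ne_zero hne, h⟩

lemma sCount_transpose (p : Multiset ℕ) (w : ℕ) :
    sCount (transpose p) w
      = ((Finset.range (maxPart p)).filter (fun j => w ≤ sCount p (j + 1))).card := by
  rw [transpose, sCount, Multiset.filter_map, Multiset.card_map]
  rfl

lemma transpose_galois (p : Multiset ℕ) {i w : ℕ} (hi : 1 ≤ i) (hw : 1 ≤ w) :
    w ≤ sCount (transpose p) i ↔ i ≤ sCount p w := by
  rw [sCount_transpose]
  constructor
  · intro h
    by_contra hc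
    push_neg at hc
    have hsub : (Finset.range (maxPart p)).filter (fun j => i ≤ sCount p (j + 1))
        ⊆ Finset.range (w - 1) := by
      intro j hj
      obtain ⟨hj1, hj2⟩ := Finset.mem_filter.mp hj
      rw [Finset.mem_range] at hj1 ⊢
      by_contra hjw
      push_neg at hjw
      have : sCount p (j + 1) ≤ sCount p w := sCount_anti p (by omega)
      omega
    have hcard := Finset.card_le_card hsub
    rw [Finset.card_range] at hcard
    omega
  · intro h
    have hwM : w ≤ maxPart p := by
      obtain ⟨a, ha, haw⟩ := (one_le_sCount_iff p w).mp (by omega)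
      exact le_trans haw (le_maxPart_of_mem ha)
    have hsub : Finset.range w
        ⊆ (Finset.range (maxPart p)).filter (fun j => i ≤ sCount p (j + 1)) := by
      intro j hj
      rw [Finset.mem_range] at hj
      refine Finset.mem_filter.mpr ⟨Finset.mem_range.mpr (by omega), ?_⟩
      have : sCount p w ≤ sCount p (j + 1) := sCount_anti p (by omega)
      omega
    have hcard := Finset.card_le_card hsub
    rw [Finset.card_range] at hcard
    omega

lemma sum_range_shift (f : ℕ → ℕ) (M : ℕ) :
    ∑ j ∈ Finset.range M, f (j + 1) = ∑ i ∈ Finset.Icc 1 M, f i := by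
  rw [← Finset.Ico_add_one_right_eq_Icc, Finset.sum_Ico_eq_sum_range]
  have h3 : M + 1 - 1 = M := rfl
  rw [h3]
  exact (Finset.sum_congr rfl fun j _ => by rw [Nat.add_comm]).symm

lemma transpose_sum (p : Multiset ℕ) : (transpose p).sum = p.sum := by
  have h1 : (transpose p).sum = ∑ j ∈ Finset.range (maxPart p), sCount p (j + 1) := rfl
  rw [h1, sum_range_shift, colSum_eq]
  have h4 : p.map (fun a => min a (maxPart p)) = p.map id :=
    Multiset.map_congr rfl fun a ha => by
      have := le_maxPart_of_mem ha
      simp only [id]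
      omega
  rw [h4, Multiset.map_id]

lemma transpose_pos (p : Multiset ℕ) : ∀ x ∈ transpose p, 0 < x := by
  intro x hx
  rw [transpose, Multiset.mem_map] at hx
  obtain ⟨j, hj, rfl⟩ := hx
  rw [Multiset.mem_range] at hj
  have := one_le_sCount_of_le_max (p := p) (i := j + 1) (by omega) (by omega)
  omega

lemma topSum_transpose (p : Multiset ℕ) (m : ℕ) :
    topSum (transpose p) m = ∑ w ∈ Finset.Icc 1 m, sCount p w := by
  rw [topSum, transpose_sum]
  have h1 : ∀ i ∈ Finset.Icc 1 p.sum, min m (sCount (transpose p) i)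
      = ∑ w ∈ Finset.Icc 1 m, (if w ≤ sCount (transpose p) i then 1 else 0) := by
    intro i _
    rw [← Finset.card_filter, card_filter_Icc_le]
    omega
  rw [Finset.sum_congr rfl h1, Finset.sum_comm]
  refine Finset.sum_congr rfl fun w hw => ?_
  have hw1 := (Finset.mem_Icc.mp hw).1
  have h2 : ∀ i ∈ Finset.Icc 1 p.sum, (if w ≤ sCount (transpose p) i then (1:ℕ) else 0)
      = (if i ≤ sCount p w then (1:ℕ) else 0) := by
    intro i hi
    have hi1 := (Finset.mem_Icc.mp hi).1
    have hiff := transpose_galois p hi1 hw1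
    simp only [hiff]
  rw [Finset.sum_congr rfl h2, ← Finset.card_filter, card_filter_Icc_le]
  have := sCount_le_sum p hw1
  omega

lemma colSum_transpose (p : Multiset ℕ) (k : ℕ) :
    ∑ i ∈ Finset.Icc 1 k, sCount (transpose p) i = topSum p k := by
  rw [colSum_eq, transpose, Multiset.map_map]
  have h1 : ((Multiset.range (maxPart p)).map
      ((fun a => min a k) ∘ fun i => sCount p (i + 1))).sum
      = ∑ j ∈ Finset.range (maxPart p), min (sCount p (j + 1)) k := rfl
  rw [h1, sum_range_shift (fun i => min (sCount p i) k)]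
  by_cases hM : 1 ≤ maxPart p
  · rw [topSum, sum_Icc_split (fun i => min k (sCount p i)) hM (maxPart_le_sum p)]
    have h2 : ∀ i ∈ Finset.Ioc (maxPart p) p.sum, min k (sCount p i) = 0 := by
      intro i hi
      have hi1 := (Finset.mem_Ioc.mp hi).1
      have := sCount_eq_zero_of_gt_max (p := p) (i := i) (by omega)
      omega
    rw [Finset.sum_congr rfl h2, Finset.sum_const_zero, Nat.add_zero]
    exact Finset.sum_congr rfl fun i _ => min_comm _ _
  · have hM0 : maxPart p = 0 := by omega
    rw [hM0]
    have h2 : ∀ i ∈ Finset.Icc 1 p.sum, min k (sCount p i) = 0 := by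
      intro i hi
      have hi1 := (Finset.mem_Icc.mp hi).1
      have := sCount_eq_zero_of_gt_max (p := p) (i := i) (by omega)
      omega
    rw [topSum, Finset.sum_congr rfl h2]
    simp

lemma sCount_transpose_transpose (p : Multiset ℕ) {w : ℕ} (hw : 1 ≤ w) :
    sCount (transpose (transpose p)) w = sCount p w := by
  rw [sCount_transpose (transpose p) w]
  have h1 : (Finset.range (maxPart (transpose p))).filter
        (fun j => w ≤ sCount (transpose p) (j + 1))
      = Finset.range (min (sCount p w) (maxPart (transpose p))) := by
    ext j
    simp only [Finset.mem_filter, Finset.mem_range]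
    constructor
    · rintro ⟨hj1, hj2⟩
      have := (transpose_galois p (by omega) hw).mp hj2
      omega
    · intro hj
      have hj2 : j + 1 ≤ sCount p w := by omega
      exact ⟨by omega, (transpose_galois p (by omega) hw).mpr hj2⟩
  rw [h1, Finset.card_range]
  by_cases h0 : sCount p w = 0
  · omega
  · have hwM : w ≤ maxPart p := by
      obtain ⟨a, ha, haw⟩ := (one_le_sCount_iff p w).mp (by omega)
      exact le_trans haw (le_maxPart_of_mem ha)
    have hmem : sCount p w ∈ transpose p := by
      rw [transpose, Multiset.mem_map]
      exact ⟨w - 1, Multiset.mem_range.mpr (by omega), by rw [show w - 1 + 1 = w by omega]⟩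
    have := le_maxPart_of_mem hmem
    omega

lemma transpose_transpose (p : Multiset ℕ) (hpos : ∀ a ∈ p, 0 < a) :
    transpose (transpose p) = p := by
  ext a
  by_cases ha : a = 0
  · subst ha
    have h1 : (0:ℕ) ∉ transpose (transpose p) := fun h => by
      have := transpose_pos (transpose p) 0 h
      omega
    have h2 : (0:ℕ) ∉ p := fun h => by
      have := hpos 0 h
      omega
    rw [Multiset.count_eq_zero.mpr h1, Multiset.count_eq_zero.mpr h2]
  · have e1 := count_add_sCount (transpose (transpose p)) a
    have e2 := count_add_sCount p a
    have e3 := sCount_transpose_transpose p (show 1 ≤ a by omega)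
    have e4 := sCount_transpose_transpose p (show 1 ≤ a + 1 by omega)
    omega

lemma exists_mem_of_ne_zero' {p : Multiset ℕ} (h : p ≠ 0) : ∃ a, a ∈ p :=
  Multiset.exists_mem_of_ne_zero h

lemma minPart_mem {p : Multiset ℕ} (h : p ≠ 0) : minPart p ∈ p := by
  have hne : {a : ℕ | a ∈ p}.Nonempty := by
    obtain ⟨a, ha⟩ := exists_mem_of_ne_zero' h
    exact ⟨a, ha⟩
  exact Nat.sInf_mem hne

lemma minPart_le {p : Multiset ℕ} {a : ℕ} (h : a ∈ p) : minPart p ≤ a :=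
  Nat.sInf_le h

lemma sCount_minPart {p : Multiset ℕ} (h : p ≠ 0) :
    sCount p (minPart p) = Multiset.card p := by
  rw [sCount, Multiset.filter_eq_self.mpr fun a ha => minPart_le ha]

lemma pMinus_sum {p : Multiset ℕ} (hne : p ≠ 0) (hpos : ∀ a ∈ p, 0 < a) :
    (pMinus p).sum + 1 = p.sum := by
  have hpe : minPart p ::ₘ p.erase (minPart p) = p := Multiset.cons_erase (minPart_mem hne)
  have hμ1 : 1 ≤ minPart p := hpos _ (minPart_mem hne)
  have hsum2 := congrArg Multiset.sum hpe
  rw [Multiset.sum_cons] at hsum2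
  rw [pMinus]
  split
  · omega
  · rw [Multiset.sum_cons]
    omega

lemma pMinus_pos {p : Multiset ℕ} (hpos : ∀ a ∈ p, 0 < a) :
    ∀ a ∈ pMinus p, 0 < a := by
  intro a ha
  rw [pMinus] at ha
  split at ha
  · exact hpos a (Multiset.mem_of_mem_erase ha)
  · rw [Multiset.mem_cons] at ha
    rcases ha with rfl | ha
    · omega
    · exact hpos a (Multiset.mem_of_mem_erase ha)

lemma pMinus_card_le (p : Multiset ℕ) : Multiset.card (pMinus p) ≤ Multiset.card p := by
  by_cases hp0 : p = 0
  · subst hp0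
    have h0 : minPart (0 : Multiset ℕ) ≤ 1 := by
      rw [minPart]
      have he : {a : ℕ | a ∈ (0 : Multiset ℕ)} = ∅ := by simp
      rw [he, Nat.sInf_empty]
      omega
    rw [pMinus, if_pos h0]
    simp
  · have hmem := minPart_mem hp0
    have hcard : 1 ≤ Multiset.card p := by
      rw [Nat.one_le_iff_ne_zero, Ne, Multiset.card_eq_zero]
      exact hp0
    rw [pMinus]
    split
    · exact Multiset.card_le_card (Multiset.erase_le _ _)
    · rw [Multiset.card_cons, Multiset.card_erase_of_mem hmem, Nat.pred_eq_sub_one]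
      omega

lemma sCount_pMinus {p : Multiset ℕ} (hne : p ≠ 0) (hpos : ∀ a ∈ p, 0 < a) {i : ℕ}
    (hi : 1 ≤ i) :
    sCount p i = sCount (pMinus p) i + (if i = minPart p then 1 else 0) := by
  have hpe : minPart p ::ₘ p.erase (minPart p) = p := Multiset.cons_erase (minPart_mem hne)
  have hμ1 : 1 ≤ minPart p := hpos _ (minPart_mem hne)
  have hp1 : sCount p i = (if i ≤ minPart p then 1 else 0) + sCount (p.erase (minPart p)) i := by
    rw [← hpe, sCount_cons, hpe]
  rw [pMinus]
  split
  · rw [hp1]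
    split_ifs <;> omega
  · rw [hp1, sCount_cons]
    split_ifs <;> omega

lemma halves_sum (X : Multiset ℕ) :
    2 * ((X.map (fun b => b / 2)).sum) + (X.filter (fun a => a % 2 = 1)).card = X.sum := by
  induction X using Multiset.induction_on with
  | empty => simp
  | cons b s ih =>
    rw [Multiset.map_cons, Multiset.sum_cons, Multiset.sum_cons, Multiset.filter_cons]
    by_cases h : b % 2 = 1
    · rw [if_pos h, Multiset.card_add, Multiset.card_singleton]
      omega
    · rw [if_neg h, zero_add]
      omega

lemma filter_pos_sum (X : Multiset ℕ) : (X.filter (fun x => 0 < x)).sum = X.sum := by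
  induction X using Multiset.induction_on with
  | empty => simp
  | cons b s ih =>
    rw [Multiset.filter_cons, Multiset.sum_cons]
    by_cases h : 0 < b
    · rw [if_pos h, Multiset.sum_add, Multiset.sum_singleton, ih]
    · rw [if_neg h, zero_add, ih]
      omega

lemma oddMult_parity (p : Multiset ℕ) : oddMult p % 2 = p.sum % 2 := by
  rw [oddMult, ← sum_mod_two]

lemma oddMult_le_card (p : Multiset ℕ) : oddMult p ≤ Multiset.card p :=
  Multiset.card_le_card (Multiset.filter_le _ p)

lemma addPart_sum (w : ℕ) (X : Multiset ℕ) : (addPart w X).sum = w + X.sum := by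
  rw [addPart]
  split
  · omega
  · rw [Multiset.sum_cons]

lemma sCount_addPart (w : ℕ) (X : Multiset ℕ) {i : ℕ} (hi : 1 ≤ i) :
    sCount (addPart w X) i = (if i ≤ w then 1 else 0) + sCount X i := by
  rw [addPart]
  split
  · split_ifs <;> omega
  · rw [sCount_cons]

lemma sCount_add (X Y : Multiset ℕ) (i : ℕ) :
    sCount (X + Y) i = sCount X i + sCount Y i := by
  rw [sCount, sCount, sCount, Multiset.filter_add, Multiset.card_add]

lemma sCount_halves (p : Multiset ℕ) {j : ℕ} (hj : 1 ≤ j) :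
    sCount ((p.map (fun b => b / 2)).filter (fun x => 0 < x)) j = sCount p (2 * j) := by
  rw [sCount, Multiset.filter_filter, Multiset.filter_map, Multiset.card_map, sCount]
  congr 1
  apply Multiset.filter_congr
  intro a _
  constructor
  · rintro ⟨h1, h2⟩
    simp only [Function.comp] at h1 h2 ⊢
    omega
  · intro h
    simp only [Function.comp]
    constructor <;> omega

lemma pOne_sum (p : Multiset ℕ) :
    2 * (pOne p).sum + oddMult p = p.sum := by
  rw [pOne, transpose_sum, filter_pos_sum, oddMult]
  exact halves_sum p

lemma P_sum (n : ℕ) (p : Multiset ℕ) (hsum : p.sum = 2 * n + 1) :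
    (addPart (oddMult p - 1) (pOne p + pOne p)).sum = 2 * n := by
  have h1 := pOne_sum p
  have h2 : oddMult p % 2 = 1 := by rw [oddMult_parity, hsum]; omega
  rw [addPart_sum, Multiset.sum_add]
  omega

lemma topSum_pMinus_rel (n : ℕ) (p : Multiset ℕ) (hp : IsPartitionOf p (2 * n + 1)) (k : ℕ) :
    topSum (pMinus p) k + min k (Multiset.card p)
      = topSum p k + min k (Multiset.card p - 1) := by
  have h2 := hp.2
  have hpne : p ≠ 0 := by
    intro h0
    rw [h0, Multiset.sum_zero] at h2
    omega
  have hpos := hp.1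
  have hqsum : (pMinus p).sum = 2 * n := by
    have := pMinus_sum hpne hpos
    omega
  have hμmem := minPart_mem hpne
  have hμ1 : 1 ≤ minPart p := hpos _ hμmem
  have hμle : minPart p ≤ 2 * n + 1 := by
    have := mem_le_sum hμmem
    omega
  have hK : sCount p (minPart p) = Multiset.card p := sCount_minPart hpne
  have hKq : sCount (pMinus p) (minPart p) + 1 = Multiset.card p := by
    have h3 := sCount_pMinus hpne hpos (i := minPart p) hμ1
    rw [if_pos rfl] at h3
    omega
  have hq0 : sCount (pMinus p) (2 * n + 1) = 0 := sCount_eq_zero _ (by omega)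
  have hqpad : ∑ i ∈ Finset.Icc 1 (2 * n + 1), min k (sCount (pMinus p) i)
      = topSum (pMinus p) k := by
    rw [Finset.sum_Icc_succ_top (by omega : 1 ≤ 2 * n + 1), hq0, topSum, hqsum]
    simp
  have hppad : topSum p k = ∑ i ∈ Finset.Icc 1 (2 * n + 1), min k (sCount p i) := by
    rw [topSum, h2]
  have hμIcc : minPart p ∈ Finset.Icc 1 (2 * n + 1) := Finset.mem_Icc.mpr ⟨hμ1, hμle⟩
  rw [hppad, ← hqpad, ← Finset.add_sum_erase _ _ hμIcc,
    ← Finset.add_sum_erase _ (fun i => min k (sCount p i)) hμIcc]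
  have hcong : ∀ i ∈ (Finset.Icc 1 (2 * n + 1)).erase (minPart p),
      min k (sCount (pMinus p) i) = min k (sCount p i) := by
    intro i hi
    have hine := (Finset.mem_erase.mp hi).1
    have hiI := Finset.mem_Icc.mp (Finset.mem_erase.mp hi).2
    have h4 := sCount_pMinus hpne hpos (i := i) hiI.1
    rw [if_neg hine] at h4
    omega
  rw [Finset.sum_congr rfl hcong, hK]
  omega

lemma topSum_odd_even_split (n : ℕ) (p : Multiset ℕ) (hsum : p.sum = 2 * n + 1) (k : ℕ) :
    topSum p k = (∑ j ∈ Finset.Icc 1 (n + 1), min k (sCount p (2 * j - 1)))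
      + (∑ j ∈ Finset.Icc 1 n, min k (sCount p (2 * j))) := by
  have hdisj : Disjoint ((Finset.Icc 1 (n + 1)).image (fun j => 2 * j - 1))
      ((Finset.Icc 1 n).image (fun j => 2 * j)) := by
    simp only [Finset.disjoint_left, Finset.mem_image, Finset.mem_Icc]
    rintro a ⟨j, hj, rfl⟩ ⟨j', hj', he⟩
    omega
  have hset : Finset.Icc 1 (2 * n + 1)
      = ((Finset.Icc 1 (n + 1)).image (fun j => 2 * j - 1))
        ∪ ((Finset.Icc 1 n).image (fun j => 2 * j)) := by
    ext x
    simp only [Finset.mem_union, Finset.mem_image, Finset.mem_Icc]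
    constructor
    · intro hx
      rcases Nat.even_or_odd x with he | ho
      · right
        obtain ⟨y, hy⟩ := he
        exact ⟨y, by omega, by omega⟩
      · left
        obtain ⟨y, hy⟩ := ho
        exact ⟨y + 1, by omega, by omega⟩
    · rintro (⟨j, hj, rfl⟩ | ⟨j, hj, rfl⟩) <;> omega
  rw [topSum, hsum, hset, Finset.sum_union hdisj,
    Finset.sum_image (by intro x _ y _ h; simp only at h; omega),
    Finset.sum_image (by intro x _ y _ h; simp only at h; omega)]

lemma oddMult_sum_eq (n : ℕ) (p : Multiset ℕ) (hsum : p.sum = 2 * n + 1)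
    (hpos : ∀ a ∈ p, 0 < a) :
    oddMult p + ∑ j ∈ Finset.Icc 1 (n + 1), sCount p (2 * j)
      = ∑ j ∈ Finset.Icc 1 (n + 1), sCount p (2 * j - 1) := by
  classical
  have h1 : ∀ j ∈ Finset.Icc 1 (n + 1),
      sCount p (2 * j - 1) = p.count (2 * j - 1) + sCount p (2 * j) := by
    intro j hj
    have hj1 := (Finset.mem_Icc.mp hj).1
    have h2 : 2 * j - 1 + 1 = 2 * j := by omega
    rw [← count_add_sCount p (2 * j - 1), h2]
  rw [Finset.sum_congr rfl h1, Finset.sum_add_distrib]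
  have hO : oddMult p = ∑ j ∈ Finset.Icc 1 (n + 1), p.count (2 * j - 1) := by
    have hXsub : (p.filter (fun a => a % 2 = 1)).toFinset
        ⊆ (Finset.Icc 1 (n + 1)).image (fun j => 2 * j - 1) := by
      intro a ha
      have ham := Multiset.mem_toFinset.mp ha
      obtain ⟨hap, haodd⟩ := Multiset.mem_filter.mp ham
      have hg1 := hpos a hap
      have hg2 := mem_le_sum hap
      exact Finset.mem_image.mpr ⟨(a + 1) / 2, Finset.mem_Icc.mpr (by omega), by omega⟩
    have e1 : oddMult p = ∑ v ∈ (p.filter (fun a => a % 2 = 1)).toFinset,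
        (p.filter (fun a => a % 2 = 1)).count v := by
      rw [Multiset.toFinset_sum_count_eq]
      rfl
    have e2 : ∀ v ∈ (p.filter (fun a => a % 2 = 1)).toFinset,
        (p.filter (fun a => a % 2 = 1)).count v = p.count v := by
      intro v hv
      have hvm := Multiset.mem_toFinset.mp hv
      have hvodd : v % 2 = 1 := (Multiset.mem_filter.mp hvm).2
      rw [Multiset.count_filter, if_pos hvodd]
    have e3 : ∑ v ∈ (p.filter (fun a => a % 2 = 1)).toFinset, p.count v
        = ∑ v ∈ (Finset.Icc 1 (n + 1)).image (fun j => 2 * j - 1), p.count v := by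
      apply Finset.sum_subset hXsub
      intro x hx hnx
      by_contra hne
      have hxp : x ∈ p := by
        rw [← Multiset.count_pos]
        omega
      obtain ⟨j, hj, rfl⟩ := Finset.mem_image.mp hx
      have hj1 := (Finset.mem_Icc.mp hj).1
      have hxodd : (2 * j - 1) % 2 = 1 := by omega
      have : (2 * j - 1) ∈ (p.filter (fun a => a % 2 = 1)).toFinset :=
        Multiset.mem_toFinset.mpr (Multiset.mem_filter.mpr ⟨hxp, hxodd⟩)
      exact hnx this
    have e4 : ∑ v ∈ (Finset.Icc 1 (n + 1)).image (fun j => 2 * j - 1), p.count v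
        = ∑ j ∈ Finset.Icc 1 (n + 1), p.count (2 * j - 1) :=
      Finset.sum_image (by intro x hx y hy h; simp only [Finset.coe_Icc, Set.mem_Icc] at hx hy h; omega)
    rw [e1, Finset.sum_congr rfl e2, e3, e4]
  omega

lemma sCount_P (p : Multiset ℕ) {i : ℕ} (hi : 1 ≤ i) :
    sCount (addPart (oddMult p - 1) (pOne p + pOne p)) i
      = (if i ≤ oddMult p - 1 then 1 else 0) + (sCount (pOne p) i + sCount (pOne p) i) := by
  rw [sCount_addPart _ _ hi, sCount_add]

lemma colSum_pOne (n : ℕ) (p : Multiset ℕ) (hsum : p.sum = 2 * n + 1) (k : ℕ) :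
    ∑ i ∈ Finset.Icc 1 k, sCount (pOne p) i
      = ∑ j ∈ Finset.Icc 1 n, min k (sCount p (2 * j)) := by
  rw [pOne, colSum_transpose]
  have hS : ((p.map (fun b => b / 2)).filter (fun x => 0 < x)).sum ≤ n := by
    have h1 := halves_sum p
    have h2 := filter_pos_sum (p.map (fun b => b / 2))
    have h3 : 1 ≤ (p.filter (fun a => a % 2 = 1)).card := by
      have h4 := sum_mod_two p
      omega
    omega
  have hsc : ∀ j, 1 ≤ j →
      sCount ((p.map (fun b => b / 2)).filter (fun x => 0 < x)) j = sCount p (2 * j) :=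
    fun j hj => sCount_halves p hj
  rw [topSum]
  have hcong : ∀ j ∈ Finset.Icc 1 n, min k (sCount p (2 * j))
      = min k (sCount ((p.map (fun b => b / 2)).filter (fun x => 0 < x)) j) := by
    intro j hj
    rw [hsc j (Finset.mem_Icc.mp hj).1]
  rw [Finset.sum_congr rfl hcong]
  by_cases h0 : ((p.map (fun b => b / 2)).filter (fun x => 0 < x)).sum = 0
  · rw [h0, Finset.Icc_eq_empty (by omega : ¬ (1:ℕ) ≤ 0), Finset.sum_empty]
    symm
    apply Finset.sum_eq_zero
    intro j hj
    have hj1 := (Finset.mem_Icc.mp hj).1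
    have hz : sCount ((p.map (fun b => b / 2)).filter (fun x => 0 < x)) j = 0 :=
      sCount_eq_zero _ (by omega)
    omega
  · have h1 : 1 ≤ ((p.map (fun b => b / 2)).filter (fun x => 0 < x)).sum := by omega
    rw [sum_Icc_split
      (fun j => min k (sCount ((p.map (fun b => b / 2)).filter (fun x => 0 < x)) j)) h1 hS]
    have hzero : ∑ j ∈ Finset.Ioc ((p.map (fun b => b / 2)).filter (fun x => 0 < x)).sum n,
        min k (sCount ((p.map (fun b => b / 2)).filter (fun x => 0 < x)) j) = 0 := by
      apply Finset.sum_eq_zero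
      intro j hj
      have hj1 := (Finset.mem_Ioc.mp hj).1
      have hz : sCount ((p.map (fun b => b / 2)).filter (fun x => 0 < x)) j = 0 :=
        sCount_eq_zero _ (by omega)
      omega
    omega

lemma colSum_P (n : ℕ) (p : Multiset ℕ) (hsum : p.sum = 2 * n + 1) (k : ℕ) :
    ∑ i ∈ Finset.Icc 1 k, sCount (addPart (oddMult p - 1) (pOne p + pOne p)) i
      = min (oddMult p - 1) k + 2 * ∑ j ∈ Finset.Icc 1 n, min k (sCount p (2 * j)) := by
  have h1 : ∀ i ∈ Finset.Icc 1 k, sCount (addPart (oddMult p - 1) (pOne p + pOne p)) i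
      = (if i ≤ oddMult p - 1 then 1 else 0) + (sCount (pOne p) i + sCount (pOne p) i) := by
    intro i hi
    exact sCount_P p (Finset.mem_Icc.mp hi).1
  rw [Finset.sum_congr rfl h1, Finset.sum_add_distrib, Finset.sum_add_distrib,
    ← Finset.card_filter, card_filter_Icc_le, colSum_pOne n p hsum]
  omega

lemma map_min_le_sum (X : Multiset ℕ) (k : ℕ) : (X.map (fun a => min a k)).sum ≤ X.sum := by
  induction X using Multiset.induction_on with
  | empty => simp
  | cons b s ih =>
    rw [Multiset.map_cons, Multiset.sum_cons, Multiset.sum_cons]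
    omega

lemma colSum_le_sum (X : Multiset ℕ) (k : ℕ) :
    ∑ i ∈ Finset.Icc 1 k, sCount X i ≤ X.sum := by
  rw [colSum_eq]
  exact map_min_le_sum X k

lemma map_min_add_map_sub (X : Multiset ℕ) (m : ℕ) :
    (X.map (fun a => min a m)).sum + (X.map (fun a => a - m)).sum = X.sum := by
  induction X using Multiset.induction_on with
  | empty => simp
  | cons b s ih =>
    rw [Multiset.map_cons, Multiset.map_cons, Multiset.sum_cons, Multiset.sum_cons,
      Multiset.sum_cons]
    omega

lemma step1 (X : Multiset ℕ) (m k : ℕ) :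
    topSum X m + ∑ i ∈ Finset.Icc 1 k, sCount X i ≤ k * m + X.sum := by
  by_cases hk0 : k = 0
  · subst hk0
    rw [Finset.Icc_eq_empty (by omega : ¬ (1:ℕ) ≤ 0), Finset.sum_empty]
    have := topSum_le_sum X m
    omega
  by_cases hk : k ≤ X.sum
  · have h1 : topSum X m = ∑ i ∈ Finset.Icc 1 k, min m (sCount X i)
        + ∑ i ∈ Finset.Ioc k X.sum, min m (sCount X i) := by
      rw [topSum]
      exact sum_Icc_split _ (by omega) hk
    have h2 : ∑ i ∈ Finset.Icc 1 k, min m (sCount X i) ≤ k * m := by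
      calc ∑ i ∈ Finset.Icc 1 k, min m (sCount X i) ≤ ∑ _i ∈ Finset.Icc 1 k, m :=
            Finset.sum_le_sum fun i _ => min_le_left _ _
        _ = k * m := by
            rw [Finset.sum_const, Nat.card_Icc, smul_eq_mul]
            congr 1
    have h3 : ∑ i ∈ Finset.Ioc k X.sum, min m (sCount X i)
        ≤ ∑ i ∈ Finset.Ioc k X.sum, sCount X i :=
      Finset.sum_le_sum fun i _ => min_le_right _ _
    have h4 : ∑ i ∈ Finset.Icc 1 k, sCount X i + ∑ i ∈ Finset.Ioc k X.sum, sCount X i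
        = X.sum := by
      rw [← sum_Icc_split _ (by omega : 1 ≤ k) hk, sum_sCount_self]
    omega
  · push_neg at hk
    have h5 := colSum_le_sum X k
    have h6 := topSum_le_mul X m k (by omega)
    omega

lemma key_ineq (n : ℕ) (p : Multiset ℕ) (hp : IsPartitionOf p (2 * n + 1))
    (horth : IsOrthogonal p) (k : ℕ) :
    topSum (pMinus p) k
      ≤ (∑ i ∈ Finset.Icc 1 k, sCount (addPart (oddMult p - 1) (pOne p + pOne p)) i)
        + topSum (pMinus p) k % 2 := by
  have h2 := hp.2
  have hpos := hp.1
  have hpne : p ≠ 0 := by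
    intro h0
    rw [h0, Multiset.sum_zero] at h2
    omega
  have hK1 : 1 ≤ Multiset.card p := by
    rw [Nat.one_le_iff_ne_zero, Ne, Multiset.card_eq_zero]
    exact hpne
  have hsplit := topSum_odd_even_split n p h2 k
  have hrel := topSum_pMinus_rel n p hp k
  have hcolP := colSum_P n p h2 k
  have hOodd : oddMult p % 2 = 1 := by
    rw [oddMult_parity, h2]
    omega
  have hOK : oddMult p ≤ Multiset.card p := oddMult_le_card p
  have hf0 : sCount p (2 * (n + 1)) = 0 := sCount_eq_zero p (by omega)
  have hBext : ∑ j ∈ Finset.Icc 1 (n + 1), min k (sCount p (2 * j))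
      = ∑ j ∈ Finset.Icc 1 n, min k (sCount p (2 * j)) := by
    rw [Finset.sum_Icc_succ_top (by omega : 1 ≤ n + 1), hf0]
    simp
  have hterm : ∀ j ∈ Finset.Icc 1 (n + 1),
      min k (sCount p (2 * j - 1)) + sCount p (2 * j)
        ≤ sCount p (2 * j - 1) + min k (sCount p (2 * j)) := by
    intro j hj
    have := sCount_anti p (show 2 * j - 1 ≤ 2 * j by omega)
    omega
  have hsum1 : (∑ j ∈ Finset.Icc 1 (n + 1), min k (sCount p (2 * j - 1)))
        + ∑ j ∈ Finset.Icc 1 (n + 1), sCount p (2 * j)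
      ≤ (∑ j ∈ Finset.Icc 1 (n + 1), sCount p (2 * j - 1))
        + ∑ j ∈ Finset.Icc 1 (n + 1), min k (sCount p (2 * j)) := by
    rw [← Finset.sum_add_distrib, ← Finset.sum_add_distrib]
    exact Finset.sum_le_sum hterm
  have hOid := oddMult_sum_eq n p h2 hpos
  have hins : Finset.Icc 1 (n + 1) = insert 1 (Finset.Icc 2 (n + 1)) := by
    ext x
    simp only [Finset.mem_insert, Finset.mem_Icc]
    omega
  have hshift : ∑ j ∈ Finset.Icc 2 (n + 1), min k (sCount p (2 * j - 1))
      ≤ ∑ j ∈ Finset.Icc 1 n, min k (sCount p (2 * j)) := by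
    have himg : Finset.Icc 2 (n + 1) = (Finset.Icc 1 n).image (fun j => j + 1) := by
      ext x
      simp only [Finset.mem_image, Finset.mem_Icc]
      constructor
      · intro hx
        exact ⟨x - 1, by omega, by omega⟩
      · rintro ⟨j, hj, rfl⟩
        omega
    rw [himg, Finset.sum_image (by intro x _ y _ h; simp only at h; omega)]
    apply Finset.sum_le_sum
    intro j hj
    have := sCount_anti p (show 2 * j ≤ 2 * (j + 1) - 1 by omega)
    omega
  have hF2 : ∑ j ∈ Finset.Icc 1 (n + 1), min k (sCount p (2 * j - 1))
      ≤ (∑ j ∈ Finset.Icc 1 n, min k (sCount p (2 * j))) + k := by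
    rw [hins, Finset.sum_insert (by simp)]
    have hm : min k (sCount p (2 * 1 - 1)) ≤ k := min_le_left _ _
    omega
  omega

lemma symplectic_filter_pred (c : Multiset ℕ) (hc : IsSymplectic c) (pr : ℕ → Prop)
    [DecidablePred pr] : IsSymplectic (c.filter pr) := by
  intro a ha
  rw [Multiset.count_filter]
  split
  · exact hc a ha
  · exact Even.zero

lemma sCount_le_card (X : Multiset ℕ) (i : ℕ) : sCount X i ≤ Multiset.card X :=
  Multiset.card_le_card (Multiset.filter_le _ X)

lemma min_succ' (m x : ℕ) : min (m + 1) x = min m x + (if m + 1 ≤ x then 1 else 0) := by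
  split <;> omega

lemma topSum_succ (X : Multiset ℕ) (m : ℕ) :
    topSum X (m + 1)
      = topSum X m + ((Finset.Icc 1 X.sum).filter (fun i => m + 1 ≤ sCount X i)).card := by
  rw [topSum, topSum, Finset.card_filter, ← Finset.sum_add_distrib]
  exact Finset.sum_congr rfl fun i _ => min_succ' m (sCount X i)

lemma dom_P_transpose (n : ℕ) (p : Multiset ℕ) (hp : IsPartitionOf p (2 * n + 1))
    (horth : IsOrthogonal p) (c : Multiset ℕ) (hc : IsSpCollapse (pMinus p) c) :
    domLE (addPart (oddMult p - 1) (pOne p + pOne p)) (transpose c) := by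
  intro m
  have h2 := hp.2
  have hpos := hp.1
  have hpne : p ≠ 0 := by
    intro h0
    rw [h0, Multiset.sum_zero] at h2
    omega
  have hqsum : (pMinus p).sum = 2 * n := by
    have := pMinus_sum hpne hpos
    omega
  have hcsum : c.sum = 2 * n := by
    have := hc.1.2
    omega
  have hPsum := P_sum n p h2
  rw [topSum_transpose]
  have hPle := topSum_le_sum (addPart (oddMult p - 1) (pOne p + pOne p)) m
  by_cases hm0 : m = 0
  · subst hm0
    rw [topSum_zero]
    exact Nat.zero_le _
  by_cases hmS : 2 * n < m
  · have hsub : Finset.Icc 1 c.sum ⊆ Finset.Icc 1 m :=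
      Finset.Icc_subset_Icc_right (by omega)
    have hmono : ∑ w ∈ Finset.Icc 1 c.sum, sCount c w ≤ ∑ w ∈ Finset.Icc 1 m, sCount c w :=
      Finset.sum_le_sum_of_subset hsub
    have hself := sum_sCount_self c
    omega
  · have hm1 : 1 ≤ m := by omega
    have hmc : m ≤ c.sum := by omega
    have hcorner := topSum_corner c hm1 hmc
    have hTeven : Even ((c.filter (fun a => m < a)).sum) :=
      even_sum_symplectic _ (symplectic_filter_pred c hc.2.1 _)
    have hdom := hc.2.2.1 (sCount c (m + 1))
    have hkey := key_ineq n p hp horth (sCount c (m + 1))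
    have hstep1 := step1 (addPart (oddMult p - 1) (pOne p + pOne p)) m (sCount c (m + 1))
    have hfil := filter_sum_eq c m
    have hcolc : (∑ w ∈ Finset.Icc 1 m, sCount c w) + (c.map (fun a => a - m)).sum
        = 2 * n := by
      rw [colSum_eq, map_min_add_map_sub c m]
      exact hcsum
    have hcomm : sCount c (m + 1) * m = m * sCount c (m + 1) := Nat.mul_comm _ _
    rw [Nat.even_iff] at hTeven
    omega

lemma no_touch (n : ℕ) (p : Multiset ℕ) (hp : IsPartitionOf p (2 * n + 1))
    (horth : IsOrthogonal p) (c : Multiset ℕ) (hc : IsSpCollapse (pMinus p) c)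
    {v M : ℕ} (hv1 : 1 ≤ v) (hvodd : v % 2 = 1) (hM : M % 2 = 0)
    (hodd : topSum c M % 2 = 1)
    (hs : sCount c (v + 1) + 1 ≤ M) (ht : M + 1 ≤ sCount c v)
    {m0 : ℕ} (hm0s : sCount c (v + 1) + 1 ≤ m0) (hm0t : m0 + 1 ≤ sCount c v) :
    topSum c m0 + 1 ≤ topSum (pMinus p) m0 := by
  by_contra hcon
  push_neg at hcon
  have hdomcq := hc.2.2.1
  obtain ⟨m1, rfl⟩ : ∃ m1, m0 = m1 + 1 := ⟨m0 - 1, by omega⟩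
  have htouch : topSum c (m1 + 1) = topSum (pMinus p) (m1 + 1) :=
    le_antisymm (hdomcq (m1 + 1)) (by omega)
  have h2 := hp.2
  have hpos := hp.1
  have hpne : p ≠ 0 := by
    intro h0
    rw [h0, Multiset.sum_zero] at h2
    omega
  have hqsum : (pMinus p).sum = 2 * n := by
    have := pMinus_sum hpne hpos
    omega
  have hcsum : c.sum = 2 * n := by
    have := hc.1.2
    omega
  have hvS : v ≤ c.sum := by
    obtain ⟨a, ha, hav⟩ := (one_le_sCount_iff c v).mp (by omega)
    exact le_trans hav (mem_le_sum ha)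
  have hw0 := topSum_window c hv1 (show sCount c (v + 1) ≤ m1 by omega)
    (show m1 ≤ sCount c v by omega) hvS
  have hw1 := topSum_window c hv1 (show sCount c (v + 1) ≤ m1 + 1 by omega)
    (show m1 + 1 ≤ sCount c v by omega) hvS
  have hw2 := topSum_window c hv1 (show sCount c (v + 1) ≤ m1 + 2 by omega)
    (show m1 + 2 ≤ sCount c v by omega) hvS
  have hwM := topSum_window c hv1 (show sCount c (v + 1) ≤ M by omega)
    (show M ≤ sCount c v by omega) hvS
  have hq1 := topSum_succ (pMinus p) m1
  have hq2 : topSum (pMinus p) (m1 + 2) = topSum (pMinus p) (m1 + 1)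
      + ((Finset.Icc 1 (pMinus p).sum).filter
          (fun i => m1 + 2 ≤ sCount (pMinus p) i)).card :=
    topSum_succ (pMinus p) (m1 + 1)
  have hb1 : topSum c m1 ≤ topSum (pMinus p) m1 := hdomcq m1
  have hb2 : topSum c (m1 + 2) ≤ topSum (pMinus p) (m1 + 2) := hdomcq (m1 + 2)
  have hr0 : (m1 + 1) * v = m1 * v + v := by ring
  have hr1 : (m1 + 2) * v = m1 * v + 2 * v := by ring
  have hNa : v ≤ ((Finset.Icc 1 (pMinus p).sum).filter
      (fun i => m1 + 2 ≤ sCount (pMinus p) i)).card := by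
    omega
  have hNb : ((Finset.Icc 1 (pMinus p).sum).filter
      (fun i => m1 + 1 ≤ sCount (pMinus p) i)).card ≤ v := by
    omega
  have hqv : m1 + 2 ≤ sCount (pMinus p) v := by
    by_contra hcon2
    push_neg at hcon2
    have hsub : (Finset.Icc 1 (pMinus p).sum).filter
        (fun i => m1 + 2 ≤ sCount (pMinus p) i) ⊆ Finset.Icc 1 (v - 1) := by
      intro i hi
      obtain ⟨hiI, hig⟩ := Finset.mem_filter.mp hi
      have hiI' := Finset.mem_Icc.mp hiI
      have hvi : ¬ v ≤ i := fun hvi => by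
        have := sCount_anti (pMinus p) hvi
        omega
      exact Finset.mem_Icc.mpr ⟨hiI'.1, by omega⟩
    have hcard := Finset.card_le_card hsub
    rw [Nat.card_Icc] at hcard
    omega
  have hqv1 : sCount (pMinus p) (v + 1) + 1 ≤ m1 + 1 := by
    by_contra hcon2
    push_neg at hcon2
    have hv1S : v + 1 ≤ (pMinus p).sum := by
      obtain ⟨a, ha, hav⟩ := (one_le_sCount_iff (pMinus p) (v + 1)).mp (by omega)
      exact le_trans hav (mem_le_sum ha)
    have hsub : Finset.Icc 1 (v + 1) ⊆ (Finset.Icc 1 (pMinus p).sum).filter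
        (fun i => m1 + 1 ≤ sCount (pMinus p) i) := by
      intro i hi
      have hi' := Finset.mem_Icc.mp hi
      refine Finset.mem_filter.mpr ⟨Finset.mem_Icc.mpr ⟨hi'.1, by omega⟩, ?_⟩
      have := sCount_anti (pMinus p) hi'.2
      omega
    have hcard := Finset.card_le_card hsub
    rw [Nat.card_Icc] at hcard
    omega
  have hKcard : sCount (pMinus p) v ≤ Multiset.card p :=
    le_trans (sCount_le_card _ _) (pMinus_card_le p)
  have hμmem := minPart_mem hpne
  have hμ1 : 1 ≤ minPart p := hpos _ hμmem
  have hKp : sCount p (minPart p) = Multiset.card p := sCount_minPart hpne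
  have hscv1 := sCount_pMinus hpne hpos (i := v + 1) (by omega)
  have hscv := sCount_pMinus hpne hpos (i := v) (by omega)
  by_cases hμv : v + 1 = minPart p
  · have hcardp : sCount p (v + 1) = Multiset.card p := by
      rw [hμv]
      exact hKp
    rw [if_pos hμv] at hscv1
    omega
  · rw [if_neg hμv] at hscv1
    have hpw1 : sCount p (v + 1) ≤ m1 + 1 := by omega
    have hpw2 : m1 + 1 ≤ sCount p v := by
      split_ifs at hscv <;> omega
    have hvPS : v ≤ p.sum := by omega
    have hparp := topSum_parity_oddrun p horth hvodd hpw1 hpw2 hvPS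
    have hrel := topSum_pMinus_rel n p hp (m1 + 1)
    have hMv : M * v % 2 = 0 := by
      rw [Nat.mul_mod, hM, Nat.zero_mul]
    have hm1v : (m1 + 1) * v % 2 = (m1 + 1) % 2 := by
      rw [Nat.mul_mod, hvodd, Nat.mul_one]
      omega
    omega

lemma collapse_even (n : ℕ) (p : Multiset ℕ) (hp : IsPartitionOf p (2 * n + 1))
    (horth : IsOrthogonal p) (c : Multiset ℕ) (hc : IsSpCollapse (pMinus p) c) :
    ∀ M, M % 2 = 0 → topSum c M % 2 = 0 := by
  intro M hM
  by_contra hoddc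
  have hodd : topSum c M % 2 = 1 := by omega
  have hsym := hc.2.1
  have h2 := hp.2
  have hpos := hp.1
  have hpne : p ≠ 0 := by
    intro h0
    rw [h0, Multiset.sum_zero] at h2
    omega
  have hqsum : (pMinus p).sum = 2 * n := by
    have := pMinus_sum hpne hpos
    omega
  have hcsum : c.sum = 2 * n := by
    have := hc.1.2
    omega
  have hM1 : 1 ≤ M := by
    rcases Nat.eq_zero_or_pos M with h0 | h1
    · subst h0
      rw [topSum_zero c] at hodd
      omega
    · exact h1
  have hv_def : ∀ w, 1 ≤ w → (w ≤ sCount (transpose c) (M + 1) ↔ M + 1 ≤ sCount c w) :=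
    fun w hw => transpose_galois c (by omega) hw
  by_cases hv0 : sCount (transpose c) (M + 1) = 0
  · have h1M : sCount c 1 ≤ M := by
      by_contra hcon
      have := (hv_def 1 le_rfl).mpr (by omega)
      omega
    have hflat : ∀ i ∈ Finset.Icc 1 c.sum, min M (sCount c i) = sCount c i := by
      intro i hi
      have hi1 := (Finset.mem_Icc.mp hi).1
      have := sCount_anti c hi1
      omega
    have hfull : topSum c M = c.sum := by
      rw [topSum, Finset.sum_congr rfl hflat, sum_sCount_self]
    omega
  obtain ⟨v, hveq⟩ : ∃ v, sCount (transpose c) (M + 1) = v := ⟨_, rfl⟩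
  rw [hveq] at hv_def hv0
  have hv1' : 1 ≤ v := by omega
  have ht : M + 1 ≤ sCount c v := (hv_def v hv1').mp le_rfl
  have hs0 : sCount c (v + 1) ≤ M := by
    by_contra hcon
    have := (hv_def (v + 1) (by omega)).mpr (by omega)
    omega
  have hvS : v ≤ c.sum := by
    obtain ⟨a, ha, hav⟩ := (one_le_sCount_iff c v).mp (by omega)
    exact le_trans hav (mem_le_sum ha)
  have hvodd : v % 2 = 1 := by
    by_contra hcon
    have hveven : v % 2 = 0 := by omega
    have hw := topSum_window c hv1' hs0 (by omega) hvS
    have hpar := map_sub_parity_even c hveven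
    have hfe : Even ((c.filter (fun a => v < a)).sum) :=
      even_sum_symplectic _ (symplectic_filter_pred c hsym _)
    have hMv : M * v % 2 = 0 := by
      rw [Nat.mul_mod, hveven, Nat.mul_zero]
    rw [Nat.even_iff] at hfe
    omega
  have hs : sCount c (v + 1) + 1 ≤ M := by
    by_contra hcon
    have hEq : sCount c (v + 1) = M := by omega
    have hcorn := topSum_corner c (show 1 ≤ v by omega) (show v ≤ c.sum by omega)
    have hfe : Even ((c.filter (fun a => v < a)).sum) :=
      even_sum_symplectic _ (symplectic_filter_pred c hsym _)
    rw [Nat.even_iff] at hfe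
    rw [hEq] at hcorn
    omega
  have hcount : 2 ≤ c.count v := by
    have := count_add_sCount c v
    omega
  have hNT : ∀ m0, sCount c (v + 1) + 1 ≤ m0 → m0 + 1 ≤ sCount c v →
      topSum c m0 + 1 ≤ topSum (pMinus p) m0 :=
    fun m0 h1 hh2 => no_touch n p hp horth c hc hv1' hvodd hM hodd hs ht h1 hh2
  -- the improving move
  have hvc : v ∈ c := by
    rw [← Multiset.count_pos]
    omega
  have hvc2 : v ∈ c.erase v := by
    rw [← Multiset.count_pos, Multiset.count_erase_self]
    omega
  have hsce : ∀ i, sCount c i = (if i ≤ v then 1 else 0) + sCount (c.erase v) i := by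
    intro i
    conv_lhs => rw [← Multiset.cons_erase hvc]
    rw [sCount_cons]
  have hsce2 : ∀ i, sCount (c.erase v) i
      = (if i ≤ v then 1 else 0) + sCount ((c.erase v).erase v) i := by
    intro i
    conv_lhs => rw [← Multiset.cons_erase hvc2]
    rw [sCount_cons]
  have hsc' : ∀ i, 1 ≤ i → sCount ((v + 1) ::ₘ addPart (v - 1) ((c.erase v).erase v)) i
        + (if i = v then 1 else 0)
      = sCount c i + (if i = v + 1 then 1 else 0) := by
    intro i hi
    rw [sCount_cons, sCount_addPart _ _ hi]
    have hh1 := hsce i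
    have hh2 := hsce2 i
    split_ifs at hh1 hh2 ⊢ <;> omega
  have heesum : ((c.erase v).erase v).sum + v + v = c.sum := by
    have e1 := congrArg Multiset.sum (Multiset.cons_erase hvc)
    have e2 := congrArg Multiset.sum (Multiset.cons_erase hvc2)
    rw [Multiset.sum_cons] at e1 e2
    omega
  have hc'sum : ((v + 1) ::ₘ addPart (v - 1) ((c.erase v).erase v)).sum = c.sum := by
    rw [Multiset.sum_cons, addPart_sum]
    omega
  have hc'pos : ∀ a ∈ (v + 1) ::ₘ addPart (v - 1) ((c.erase v).erase v), 0 < a := by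
    intro a ha
    rw [Multiset.mem_cons] at ha
    rcases ha with rfl | ha
    · omega
    · rw [addPart] at ha
      split at ha
      · exact hc.1.1 a (Multiset.mem_of_mem_erase (Multiset.mem_of_mem_erase ha))
      · rw [Multiset.mem_cons] at ha
        rcases ha with rfl | ha
        · omega
        · exact hc.1.1 a (Multiset.mem_of_mem_erase (Multiset.mem_of_mem_erase ha))
  have hceecnt : ∀ b, ((c.erase v).erase v).count b
      = c.count b - (if b = v then 2 else 0) := by
    intro b
    by_cases hb : b = v
    · subst hb
      rw [Multiset.count_erase_self, Multiset.count_erase_self, if_pos rfl]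
      omega
    · rw [Multiset.count_erase_of_ne hb, Multiset.count_erase_of_ne hb, if_neg hb]
      omega
  have hc'sym : IsSymplectic ((v + 1) ::ₘ addPart (v - 1) ((c.erase v).erase v)) := by
    intro a ha
    have heec : Even (((c.erase v).erase v).count a) := by
      rw [hceecnt a]
      by_cases hav : a = v
      · subst hav
        rw [if_pos rfl]
        have := hsym a ha
        rw [Nat.even_iff] at this ⊢
        omega
      · rw [if_neg hav]
        have := hsym a ha
        rw [Nat.even_iff] at this ⊢
        omega
    rw [Multiset.count_cons]
    have hapv : ¬ a = v + 1 := by omega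
    rw [if_neg hapv, addPart]
    split
    · simpa using heec
    · rw [Multiset.count_cons]
      have hav1 : ¬ a = v - 1 := by omega
      rw [if_neg hav1]
      simpa using heec
  have hv1sum : v + 1 ≤ c.sum := by omega
  have hc'top : ∀ m', topSum ((v + 1) ::ₘ addPart (v - 1) ((c.erase v).erase v)) m'
        + (if sCount c v ≤ m' then 1 else 0)
      = topSum c m' + (if sCount c (v + 1) + 1 ≤ m' then 1 else 0) := by
    intro m'
    have hbase : topSum ((v + 1) ::ₘ addPart (v - 1) ((c.erase v).erase v)) m'
        = ∑ i ∈ Finset.Icc 1 c.sum,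
            min m' (sCount ((v + 1) ::ₘ addPart (v - 1) ((c.erase v).erase v)) i) := by
      rw [topSum, hc'sum]
    have hvmem : v ∈ Finset.Icc 1 c.sum := Finset.mem_Icc.mpr ⟨by omega, by omega⟩
    have hv1mem : v + 1 ∈ (Finset.Icc 1 c.sum).erase v := by
      rw [Finset.mem_erase]
      exact ⟨by omega, Finset.mem_Icc.mpr ⟨by omega, by omega⟩⟩
    rw [hbase, ← Finset.add_sum_erase _ _ hvmem, ← Finset.add_sum_erase _ _ hv1mem,
      topSum, ← Finset.add_sum_erase _ (fun i => min m' (sCount c i)) hvmem,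
      ← Finset.add_sum_erase _ (fun i => min m' (sCount c i)) hv1mem]
    have htail : ∀ i ∈ ((Finset.Icc 1 c.sum).erase v).erase (v + 1),
        min m' (sCount ((v + 1) ::ₘ addPart (v - 1) ((c.erase v).erase v)) i)
          = min m' (sCount c i) := by
      intro i hi
      have hi1 := Finset.mem_erase.mp hi
      have hi2 := Finset.mem_erase.mp hi1.2
      have hiI := (Finset.mem_Icc.mp hi2.2).1
      have hrel := hsc' i hiI
      rw [if_neg hi2.1, if_neg hi1.1] at hrel
      omega
    rw [Finset.sum_congr rfl htail]
    have hav := hsc' v (by omega)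
    rw [if_pos rfl, if_neg (by omega : ¬ v = v + 1)] at hav
    have hav1 := hsc' (v + 1) (by omega)
    rw [if_neg (by omega : ¬ v + 1 = v), if_pos rfl] at hav1
    split_ifs <;> omega
  have hc'dom : domLE ((v + 1) ::ₘ addPart (v - 1) ((c.erase v).erase v)) (pMinus p) := by
    intro m'
    have hrel := hc'top m'
    by_cases hin : sCount c (v + 1) + 1 ≤ m' ∧ m' + 1 ≤ sCount c v
    · have := hNT m' hin.1 hin.2
      split_ifs at hrel <;> omega
    · have := hc.2.2.1 m'
      split_ifs at hrel <;> omega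
  have hc'part : IsPartitionOf ((v + 1) ::ₘ addPart (v - 1) ((c.erase v).erase v))
      (pMinus p).sum := by
    refine ⟨hc'pos, ?_⟩
    rw [hc'sum]
    exact hc.1.2
  have hfinal := hc.2.2.2 _ hc'part hc'sym hc'dom M
  have hrelM := hc'top M
  rw [if_neg (by omega : ¬ sCount c v ≤ M), if_pos (by omega : sCount c (v + 1) + 1 ≤ M)]
    at hrelM
  omega

lemma transpose_symplectic (c : Multiset ℕ)
    (heven : ∀ M, M % 2 = 0 → topSum c M % 2 = 0) : IsSymplectic (transpose c) := by
  intro a ha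
  obtain ⟨b, rfl⟩ : ∃ b, a = 2 * b + 1 := ⟨a / 2, by omega⟩
  have e3 := count_add_sCount (transpose c) (2 * b + 1)
  have e1 := colSum_transpose c (2 * b + 1 + 1)
  have e2 := colSum_transpose c (2 * b)
  have hanti : sCount (transpose c) (2 * b + 1 + 1) ≤ sCount (transpose c) (2 * b + 1) :=
    sCount_anti _ (by omega)
  have hsplit : ∑ i ∈ Finset.Icc 1 (2 * b + 1 + 1), sCount (transpose c) i
      = (∑ i ∈ Finset.Icc 1 (2 * b), sCount (transpose c) i)
        + sCount (transpose c) (2 * b + 1) + sCount (transpose c) (2 * b + 1 + 1) := by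
    rw [Finset.sum_Icc_succ_top (by omega : 1 ≤ 2 * b + 1 + 1),
      Finset.sum_Icc_succ_top (by omega : 1 ≤ 2 * b + 1)]
  have hev1 := heven (2 * b + 1 + 1) (by omega)
  have hev2 := heven (2 * b) (by omega)
  rw [Nat.even_iff]
  omega


end lemmas

/-- `p` an orthogonal partition of `2n+1`, `P = [p₁ p₁ (2n*)]` with
`2n* = (Σ_{b_i odd} a_i) − 1`.  Then `P^{Sp_{2n}} ≤ ((p^-)_{Sp_{2n}})^t` in the dominance
order on partitions of `2n`. -/
theorem expansion_le_BV_dual_Sp (n : ℕ) (p : Multiset ℕ)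
    (hp : IsPartitionOf p (2 * n + 1)) (horth : IsOrthogonal p) :
    ∀ e c : Multiset ℕ,
      IsSpExpansion (addPart (oddMult p - 1) (pOne p + pOne p)) e →
      IsSpCollapse (pMinus p) c → domLE e (transpose c) := by
  intro e c he hcol
  have h2 := hp.2
  have hpos := hp.1
  have hpne : p ≠ 0 := by
    intro h0
    rw [h0, Multiset.sum_zero] at h2
    omega
  have hqsum : (pMinus p).sum = 2 * n := by
    have := pMinus_sum hpne hpos
    omega
  have hcsum : c.sum = 2 * n := by
    have := hcol.1.2
    omega
  have hPsum := P_sum n p h2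
  have hcpos := hcol.1.1
  have htt : transpose (transpose c) = c := transpose_transpose c hcpos
  have htsym : IsSymplectic (transpose c) :=
    transpose_symplectic c (collapse_even n p hp horth c hcol)
  have httsym : IsSymplectic (transpose (transpose c)) := by
    rw [htt]
    exact hcol.2.1
  have hpart : IsPartitionOf (transpose c)
      (addPart (oddMult p - 1) (pOne p + pOne p)).sum := by
    refine ⟨transpose_pos c, ?_⟩
    rw [transpose_sum, hPsum]
    omega
  have hdom := dom_P_transpose n p hp horth c hcol
  exact he.2.2.2.2 (transpose c) hpart htsym httsym hdom

end JiangWF
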